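/- Let U : D ⥤ C be a strong monoidal functor between monoidal categories and F ⊣ U an adjunction. Then the monad T = F ⋙ U on C is a bimonad (opmonoidal monad): the oplax monoidal structure on T obtained by composing the induced oplax structure on F with the inverse of the monoidal structure of U makes the multiplication μ : T ⋙ T ⟶ T and unit ι : 𝟭 ⟶ T into oplax monoidal (opmonoidal) natural transformations. -/

import Mathlib

open CategoryTheory MonoidalCategory

variable {C D : Type*} [Category C] [Category D] [MonoidalCategory C] [MonoidalCategory D]

/-- The oplax tensorator on a left adjoint `F` of a lax monoidal functor `U`. -/
noncomputable def mateTensorator (F : C ⥤ D) (U : D ⥤ C) (adj : F ⊣ U) [U.LaxMonoidal]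
    (x y : C) : F.obj (x ⊗ y) ⟶ F.obj x ⊗ F.obj y :=
  F.map (adj.unit.app x ⊗ₘ adj.unit.app y) ≫
    F.map (Functor.LaxMonoidal.μ U (F.obj x) (F.obj y)) ≫
      adj.counit.app (F.obj x ⊗ F.obj y)

/-- The oplax counit on a left adjoint `F` of a lax monoidal functor `U`. -/
noncomputable def mateCounit (F : C ⥤ D) (U : D ⥤ C) (adj : F ⊣ U) [U.LaxMonoidal] :
    F.obj (𝟙_ C) ⟶ 𝟙_ D :=
  F.map (Functor.LaxMonoidal.ε U) ≫ adj.counit.app (𝟙_ D)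

/-- The induced oplax tensorator of the monad `T = F ⋙ U` when `U` is strong monoidal:
compose the oplax structure of `F` with the inverse of the monoidal structure of `U`. -/
noncomputable def monadTensorator (F : C ⥤ D) (U : D ⥤ C) (adj : F ⊣ U) [U.Monoidal]
    (x y : C) : U.obj (F.obj (x ⊗ y)) ⟶ U.obj (F.obj x) ⊗ U.obj (F.obj y) :=
  U.map (mateTensorator F U adj x y) ≫ Functor.OplaxMonoidal.δ U (F.obj x) (F.obj y)

/-- The induced oplax counit of the monad `T = F ⋙ U` when `U` is strong monoidal. -/
noncomputable def monadCounit (F : C ⥤ D) (U : D ⥤ C) (adj : F ⊣ U) [U.Monoidal] :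
    U.obj (F.obj (𝟙_ C)) ⟶ 𝟙_ C :=
  U.map (mateCounit F U adj) ≫ Functor.OplaxMonoidal.η U

/-- If `U : D ⥤ C` is strong monoidal with left adjoint `F`, then the monad
`T = F ⋙ U` is a bimonad (opmonoidal monad): with respect to the induced oplax
structure `(σ², σ⁰)` on `T`, the multiplication `μ_x = U(ε_{F x})` and the unit
`ι = η` of the monad are opmonoidal natural transformations. -/
theorem bimonad_from_strong_monoidal_adjunction (F : C ⥤ D) (U : D ⥤ C)
    (adj : F ⊣ U) [U.Monoidal] :
    (∀ x y : C,
      U.map (adj.counit.app (F.obj (x ⊗ y))) ≫ monadTensorator F U adj x y =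
        U.map (F.map (monadTensorator F U adj x y)) ≫
          monadTensorator F U adj (U.obj (F.obj x)) (U.obj (F.obj y)) ≫
            (U.map (adj.counit.app (F.obj x)) ⊗ₘ U.map (adj.counit.app (F.obj y)))) ∧
    (U.map (adj.counit.app (F.obj (𝟙_ C))) ≫ monadCounit F U adj =
      U.map (F.map (monadCounit F U adj)) ≫ monadCounit F U adj) ∧
    (∀ x y : C,
      adj.unit.app (x ⊗ y) ≫ monadTensorator F U adj x y =
        (adj.unit.app x ⊗ₘ adj.unit.app y)) ∧
    (adj.unit.app (𝟙_ C) ≫ monadCounit F U adj = 𝟙 (𝟙_ C)) := by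
  refine ⟨fun x y => ?_, ?_, fun x y => ?_, ?_⟩
  · -- μ compatibility
    have aux : Functor.OplaxMonoidal.δ U (F.obj x) (F.obj y) ≫
        (adj.unit.app (U.obj (F.obj x)) ⊗ₘ adj.unit.app (U.obj (F.obj y))) ≫
          Functor.LaxMonoidal.μ U (F.obj (U.obj (F.obj x))) (F.obj (U.obj (F.obj y))) ≫
            U.map (adj.counit.app (F.obj x) ⊗ₘ adj.counit.app (F.obj y)) =
        𝟙 (U.obj (F.obj x ⊗ F.obj y)) := by
      rw [← Functor.LaxMonoidal.μ_natural, tensorHom_comp_tensorHom_assoc]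
      erw [adj.right_triangle_components, adj.right_triangle_components]
      rw [id_tensorHom_id, Category.id_comp]
      exact Functor.Monoidal.δ_μ U _ _
    have key : F.map (U.map (mateTensorator F U adj x y) ≫
          Functor.OplaxMonoidal.δ U (F.obj x) (F.obj y)) ≫
        mateTensorator F U adj (U.obj (F.obj x)) (U.obj (F.obj y)) ≫
          (adj.counit.app (F.obj x) ⊗ₘ adj.counit.app (F.obj y)) =
        adj.counit.app (F.obj (x ⊗ y)) ≫ mateTensorator F U adj x y := by
      simp only [mateTensorator, Functor.map_comp, Category.assoc]
      erw [← adj.counit_naturality (adj.counit.app (F.obj x) ⊗ₘ adj.counit.app (F.obj y))]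
      slice_lhs 4 7 => rw [← F.map_comp, ← F.map_comp, ← F.map_comp, aux, F.map_id]
      try rw [Category.id_comp]
      slice_lhs 1 3 => rw [← F.map_comp, ← F.map_comp, ← U.map_comp, ← U.map_comp]
      erw [adj.counit_naturality]
    have nat : Functor.OplaxMonoidal.δ U (F.obj (U.obj (F.obj x))) (F.obj (U.obj (F.obj y))) ≫
        (U.map (adj.counit.app (F.obj x)) ⊗ₘ U.map (adj.counit.app (F.obj y))) =
        U.map (adj.counit.app (F.obj x) ⊗ₘ adj.counit.app (F.obj y)) ≫
          Functor.OplaxMonoidal.δ U (F.obj x) (F.obj y) :=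
      Functor.OplaxMonoidal.δ_natural U _ _
    simp only [monadTensorator, Category.assoc]
    rw [nat, ← U.map_comp_assoc, ← U.map_comp_assoc, ← U.map_comp_assoc]
    simp only [Category.assoc]
    rw [key]
  · -- counit compatibility
    have key : F.map (U.map (mateCounit F U adj) ≫ Functor.OplaxMonoidal.η U) ≫
        mateCounit F U adj = adj.counit.app (F.obj (𝟙_ C)) ≫ mateCounit F U adj := by
      simp only [mateCounit, Functor.map_comp, Category.assoc]
      slice_lhs 3 4 => rw [← F.map_comp, Functor.Monoidal.η_ε, F.map_id]
      try rw [Category.id_comp]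
      slice_lhs 1 2 => rw [← F.map_comp, ← U.map_comp]
      erw [adj.counit_naturality]
    simp only [monadCounit]
    rw [← U.map_comp_assoc, ← U.map_comp_assoc, key]
  · -- unit tensor compatibility
    simp only [monadTensorator, mateTensorator, Functor.map_comp, Category.assoc]
    erw [adj.unit_naturality_assoc, adj.unit_naturality_assoc,
      adj.right_triangle_components_assoc]
    simp
  · -- unit counit compatibility
    simp only [monadCounit, mateCounit, Functor.map_comp, Category.assoc]
    erw [adj.unit_naturality_assoc, adj.right_triangle_components_assoc,
      Functor.Monoidal.ε_η]
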